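/- Every first-countable well-filtered T0 space is sober. -/

import Mathlib

open Set Topology

universe u

variable {X : Type u}

/-- Specialization order: `x ≤ y` iff `x ∈ closure {y}`. -/
def specLE [TopologicalSpace X] (x y : X) : Prop := x ∈ closure ({y} : Set X)

/-- Directed subset w.r.t. the specialization order. -/
def dirOn [TopologicalSpace X] (D : Set X) : Prop :=
  D.Nonempty ∧ ∀ a ∈ D, ∀ b ∈ D, ∃ c ∈ D, specLE a c ∧ specLE b c

/-- Downward closure w.r.t. the specialization order. -/
def dClo [TopologicalSpace X] (A : Set X) : Set X := {x | ∃ a ∈ A, specLE x a}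

/-- Upward closure w.r.t. the specialization order. -/
def uClo [TopologicalSpace X] (A : Set X) : Set X := {x | ∃ a ∈ A, specLE a x}

/-- `x` is a supremum of `D` w.r.t. the specialization order. -/
def IsSupOf [TopologicalSpace X] (D : Set X) (x : X) : Prop :=
  (∀ d ∈ D, specLE d x) ∧ ∀ y, (∀ d ∈ D, specLE d y) → specLE x y

/-- A d-space: a T0 space in which every directed set (for the specialization order)
has a supremum, and every open set is inaccessible by directed suprema. -/
def IsDSpace (X : Type u) [TopologicalSpace X] : Prop :=
  T0Space X ∧ (∀ D : Set X, dirOn D → ∃ x, IsSupOf D x) ∧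
    ∀ D : Set X, dirOn D → ∀ x, IsSupOf D x →
      ∀ U : Set X, IsOpen U → x ∈ U → (D ∩ U).Nonempty

/-- A set is saturated if it is the intersection of the open sets containing it. -/
def IsSat [TopologicalSpace X] (A : Set X) : Prop :=
  A = ⋂₀ {U : Set X | IsOpen U ∧ A ⊆ U}

/-- The collection of nonempty compact saturated subsets. -/
def KSet (X : Type u) [TopologicalSpace X] : Set (Set X) :=
  {K | K.Nonempty ∧ IsCompact K ∧ IsSat K}

/-- A filtered family of sets: nonempty, and every two members contain a common member. -/
def FiltFam [TopologicalSpace X] (𝒦 : Set (Set X)) : Prop :=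
  𝒦.Nonempty ∧ ∀ K₁ ∈ 𝒦, ∀ K₂ ∈ 𝒦, ∃ K₃ ∈ 𝒦, K₃ ⊆ K₁ ∧ K₃ ⊆ K₂

/-- Well-filtered space. -/
def IsWF (X : Type u) [TopologicalSpace X] : Prop :=
  T0Space X ∧ ∀ 𝒦 : Set (Set X), 𝒦 ⊆ KSet X → FiltFam 𝒦 →
    ∀ U : Set X, IsOpen U → ⋂₀ 𝒦 ⊆ U → ∃ K ∈ 𝒦, K ⊆ U

/-- Sober space: every irreducible closed subset is the closure of a unique point. -/
def IsSober (X : Type u) [TopologicalSpace X] : Prop :=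
  ∀ A : Set X, IsIrreducible A → IsClosed A → ∃! x : X, A = closure {x}

/-- `V` is way below `U` in the lattice of open sets: every open cover of `U`
has a finite subfamily covering `V`. -/
def wayBelow [TopologicalSpace X] (V U : Set X) : Prop :=
  ∀ 𝒞 : Set (Set X), (∀ W ∈ 𝒞, IsOpen W) → U ⊆ ⋃₀ 𝒞 →
    ∃ 𝒟 ⊆ 𝒞, 𝒟.Finite ∧ V ⊆ ⋃₀ 𝒟

/-- Core compact space. -/
def CoreCompact (X : Type u) [TopologicalSpace X] : Prop :=
  ∀ (x : X) (U : Set X), IsOpen U → x ∈ U →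
    ∃ V : Set X, IsOpen V ∧ x ∈ V ∧ wayBelow V U

/-- The underlying type of the Smyth power space: nonempty compact saturated subsets. -/
abbrev KS (X : Type u) [TopologicalSpace X] : Type u :=
  {K : Set X // K.Nonempty ∧ IsCompact K ∧ IsSat K}

/-- The upper Vietoris topology on `KS X`, generated by the sets
`□U = {K | K ⊆ U}` for `U` open; this makes `KS X` the Smyth power space `P_S(X)`. -/
instance (X : Type u) [TopologicalSpace X] : TopologicalSpace (KS X) :=
  TopologicalSpace.generateFrom
    {S | ∃ U : Set X, IsOpen U ∧ S = {K : KS X | (K : Set X) ⊆ U}}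

/-- Rudin set: a nonempty closed set that is a minimal closed set meeting all
members of some filtered family of nonempty compact saturated sets. -/
def RudinSet [TopologicalSpace X] (A : Set X) : Prop :=
  IsClosed A ∧ A.Nonempty ∧ ∃ 𝒦 : Set (Set X), 𝒦 ⊆ KSet X ∧ FiltFam 𝒦 ∧
    (∀ K ∈ 𝒦, (K ∩ A).Nonempty) ∧
    ∀ B : Set X, IsClosed B → B ⊆ A → (∀ K ∈ 𝒦, (K ∩ B).Nonempty) → B = A

/-- Well-filtered determined (WD) set. -/
def IsWDSet [TopologicalSpace X] (A : Set X) : Prop :=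
  IsClosed A ∧ A.Nonempty ∧ ∀ (Y : Type u) [TopologicalSpace Y], IsWF Y →
    ∀ f : X → Y, Continuous f → ∃ y : Y, closure (f '' A) = closure {y}

/-- Rudin space: every irreducible closed set is a Rudin set. -/
def RudinSpace (X : Type u) [TopologicalSpace X] : Prop :=
  ∀ A : Set X, IsClosed A → IsIrreducible A → RudinSet A

/-- WD space: every irreducible closed set is a WD set. -/
def WDSpace (X : Type u) [TopologicalSpace X] : Prop :=
  ∀ A : Set X, IsClosed A → IsIrreducible A → IsWDSet A

/-- DC space: every irreducible closed set is the closure of a directed set. -/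
def DCSpace (X : Type u) [TopologicalSpace X] : Prop :=
  ∀ A : Set X, IsClosed A → IsIrreducible A → ∃ D : Set X, dirOn D ∧ A = closure D

section AuxStmt3

open Filter

variable [TopologicalSpace X]

lemma specLE_refl' (x : X) : specLE x x := subset_closure rfl

lemma specLE_closure_subset {x y : X} (h : specLE x y) :
    closure ({x} : Set X) ⊆ closure {y} :=
  closure_minimal (Set.singleton_subset_iff.2 h) isClosed_closure

lemma specLE_trans' {x y z : X} (h1 : specLE x y) (h2 : specLE y z) : specLE x z :=
  specLE_closure_subset h2 h1

lemma subset_uClo (S : Set X) : S ⊆ uClo S := fun s hs => ⟨s, hs, specLE_refl' s⟩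

lemma uClo_mono {S T : Set X} (h : S ⊆ T) : uClo S ⊆ uClo T := by
  rintro z ⟨s, hs, hz⟩; exact ⟨s, h hs, hz⟩

lemma uClo_subset_of_open {S U : Set X} (hU : IsOpen U) (hSU : S ⊆ U) : uClo S ⊆ U := by
  rintro z ⟨s, hs, hsz⟩
  rcases mem_closure_iff.1 hsz U hU (hSU hs) with ⟨w, hwU, hw⟩
  rw [Set.mem_singleton_iff] at hw
  rwa [← hw]

lemma isSat_uClo (S : Set X) : IsSat (uClo S) := by
  apply Set.Subset.antisymm
  · intro z hz
    exact fun U hU => hU.2 hz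
  · intro z hz
    by_contra hzn
    have hsub : uClo S ⊆ (closure ({z} : Set X))ᶜ := by
      rintro w ⟨s, hs, hsw⟩ hwz
      exact hzn ⟨s, hs, specLE_trans' hsw hwz⟩
    have := hz ((closure ({z} : Set X))ᶜ) ⟨isClosed_closure.isOpen_compl, hsub⟩
    exact this (subset_closure rfl)

lemma isCompact_uClo {S : Set X} (h : IsCompact S) : IsCompact (uClo S) := by
  apply isCompact_of_finite_subcover
  intro ι Us hUs hcov
  rcases h.elim_finite_subcover Us hUs ((subset_uClo S).trans hcov) with ⟨t, ht⟩
  exact ⟨t, uClo_subset_of_open (isOpen_biUnion fun i _ => hUs i) ht⟩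

lemma specLE_mem_closed {B : Set X} (hB : IsClosed B) {b s : X} (hb : b ∈ B)
    (h : specLE s b) : s ∈ B := by
  have := closure_mono (Set.singleton_subset_iff.2 hb) h
  rwa [hB.closure_eq] at this

lemma irr_biInter {A : Set X} (hA : IsIrreducible A) {β : Type*} (I : Finset β)
    (g : β → Set X) (hopen : ∀ i ∈ I, IsOpen (g i)) (hne : ∀ i ∈ I, (A ∩ g i).Nonempty) :
    (A ∩ ⋂ i ∈ I, g i).Nonempty := by
  classical
  induction I using Finset.induction_on with
  | empty => simpa using hA.1
  | @insert b I0 hb ih =>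
    rw [Finset.set_biInter_insert]
    exact hA.2 _ _ (hopen b (Finset.mem_insert_self b I0))
      (isOpen_biInter_finset fun i hi => hopen i (Finset.mem_insert_of_mem hi))
      (hne b (Finset.mem_insert_self b I0))
      (ih (fun i hi => hopen i (Finset.mem_insert_of_mem hi))
        (fun i hi => hne i (Finset.mem_insert_of_mem hi)))

lemma exists_nhds_base [FirstCountableTopology X] :
    ∃ U : ℕ → X → Set X, ∀ x : X, (∀ n, IsOpen (U n x)) ∧ (∀ n, x ∈ U n x) ∧
      (∀ m n, m ≤ n → U n x ⊆ U m x) ∧ ∀ V : Set X, IsOpen V → x ∈ V → ∃ n, U n x ⊆ V := by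
  have key : ∀ x : X, ∃ u : ℕ → Set X, (∀ n, IsOpen (u n)) ∧ (∀ n, x ∈ u n) ∧
      (∀ m n, m ≤ n → u n ⊆ u m) ∧ ∀ V : Set X, IsOpen V → x ∈ V → ∃ n, u n ⊆ V := by
    intro x
    obtain ⟨b, hb⟩ := (𝓝 x).exists_antitone_basis
    have hmem : ∀ n, b n ∈ 𝓝 x := fun n => hb.1.mem_of_mem trivial
    choose o ho_sub ho_open ho_mem using fun n => mem_nhds_iff.1 (hmem n)
    refine ⟨fun n => ⋂ i ∈ Finset.range (n + 1), o i, ?_, ?_, ?_, ?_⟩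
    · intro n; exact isOpen_biInter_finset fun i _ => ho_open i
    · intro n
      simp only [Set.mem_iInter]
      intro i _; exact ho_mem i
    · intro m n hmn y hy
      simp only [Set.mem_iInter, Finset.mem_range] at hy ⊢
      intro i hi; exact hy i (by omega)
    · intro V hV hxV
      obtain ⟨n, -, hn⟩ := hb.1.mem_iff.1 (hV.mem_nhds hxV)
      refine ⟨n, ?_⟩
      intro y hy
      simp only [Set.mem_iInter, Finset.mem_range] at hy
      exact hn (ho_sub n (hy n (by omega)))
  choose U hU using key
  exact ⟨fun n x => U x n, fun x => hU x⟩

/-- Key lemma: in a well-filtered space, if a sequence converges to each of its own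
points, then the closure of its range is the closure of a single point. -/
lemma wf_limit (hwf : IsWF X) (a : ℕ → X)
    (hconv : ∀ i, Tendsto a atTop (𝓝 (a i))) :
    ∃ x, closure (Set.range a) = closure {x} := by
  set T : ℕ → Set X := fun n => a '' Set.Ici n with hT
  have hTcpt : ∀ n, IsCompact (T n) := by
    intro n
    have h1 : Tendsto (fun k => a (k + (n + 1))) atTop (𝓝 (a n)) :=
      (hconv n).comp (tendsto_add_atTop_nat (n + 1))
    have heq : T n = insert (a n) (Set.range fun k => a (k + (n + 1))) := by
      ext y
      constructor
      · rintro ⟨m, hm, rfl⟩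
        rcases eq_or_lt_of_le (Set.mem_Ici.1 hm) with h | h
        · exact Or.inl (by rw [h])
        · refine Or.inr ⟨m - (n + 1), ?_⟩
          show a (m - (n + 1) + (n + 1)) = a m
          congr 1
          omega
      · rintro (rfl | ⟨k, rfl⟩)
        · exact ⟨n, le_refl n, rfl⟩
        · exact ⟨k + (n + 1), Set.mem_Ici.2 (by omega), rfl⟩
    rw [heq]
    exact h1.isCompact_insert_range
  set K : ℕ → Set X := fun n => uClo (T n) with hK
  have haT : ∀ n, a n ∈ T n := fun n => ⟨n, le_refl n, rfl⟩
  have haK : ∀ n, a n ∈ K n := fun n => subset_uClo _ (haT n)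
  have hKmono : ∀ m n, m ≤ n → K n ⊆ K m := fun m n h =>
    uClo_mono (Set.image_mono (Set.Ici_subset_Ici.2 h))
  have hsub : Set.range K ⊆ KSet X := by
    rintro _ ⟨n, rfl⟩
    exact ⟨⟨a n, haK n⟩, isCompact_uClo (hTcpt n), isSat_uClo _⟩
  have hfilt : FiltFam (Set.range K) := by
    refine ⟨⟨K 0, Set.mem_range_self 0⟩, ?_⟩
    rintro _ ⟨n₁, rfl⟩ _ ⟨n₂, rfl⟩
    exact ⟨K (max n₁ n₂), Set.mem_range_self _, hKmono _ _ (le_max_left _ _),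
      hKmono _ _ (le_max_right _ _)⟩
  have hmin : ∀ B : Set X, IsClosed B → (∀ n, (K n ∩ B).Nonempty) →
      closure (Set.range a) ⊆ B := by
    intro B hB hmeet
    refine closure_minimal ?_ hB
    rintro _ ⟨i, rfl⟩
    rw [← hB.closure_eq]
    rw [mem_closure_iff]
    intro O hO haiO
    have hev : ∀ᶠ m in atTop, a m ∈ O := (hconv i).eventually (hO.eventually_mem haiO)
    obtain ⟨M, hM⟩ := eventually_atTop.1 hev
    obtain ⟨b, hbK, hbB⟩ := hmeet M
    obtain ⟨_, ⟨m, hm, rfl⟩, hab⟩ := hbK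
    exact ⟨a m, hM m hm, specLE_mem_closed hB hbB hab⟩
  have hx : ∃ x, x ∈ ⋂₀ Set.range K ∧ x ∈ closure (Set.range a) := by
    by_contra h
    push_neg at h
    obtain ⟨_, ⟨n, rfl⟩, hKn⟩ := hwf.2 (Set.range K) hsub hfilt (closure (Set.range a))ᶜ
      isClosed_closure.isOpen_compl (fun x hx => h x hx)
    exact hKn (haK n) (subset_closure (Set.mem_range_self n))
  obtain ⟨x, hxK, hxA⟩ := hx
  refine ⟨x, Set.Subset.antisymm ?_ ?_⟩
  · exact hmin _ isClosed_closure
      (fun n => ⟨x, hxK _ (Set.mem_range_self n), subset_closure rfl⟩)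
  · exact closure_minimal (Set.singleton_subset_iff.2 hxA) isClosed_closure

/-- Construction of self-convergent sequences inside an irreducible set, passing through
a given open set and converging onto a prescribed countable set. -/
lemma build_seq [FirstCountableTopology X]
    (U : ℕ → X → Set X)
    (hU : ∀ x : X, (∀ n, IsOpen (U n x)) ∧ (∀ n, x ∈ U n x) ∧
      (∀ m n, m ≤ n → U n x ⊆ U m x) ∧ ∀ V : Set X, IsOpen V → x ∈ V → ∃ n, U n x ⊆ V)
    {A : Set X} (hA : IsIrreducible A)
    (c : ℕ → X) (hc : ∀ n, c n ∈ A)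
    (V : Set X) (hV : IsOpen V) (hVA : (A ∩ V).Nonempty) :
    ∃ d : ℕ → X, (∀ n, d n ∈ A) ∧ (∀ n, d n ∈ V) ∧
      (∀ i, Tendsto d atTop (𝓝 (d i))) ∧
      (∀ i, Tendsto d atTop (𝓝 (c i))) := by
  classical
  set P : ℕ × X → Prop := fun p => p.2 ∈ A ∧ p.2 ∈ V ∧ ∀ i < p.1, p.2 ∈ U p.1 (c i) with hP
  set r : ℕ × X → ℕ × X → Prop := fun p q => p.1 < q.1 ∧ q.2 ∈ U q.1 p.2 with hr
  have hstep : ∀ s : Finset (ℕ × X), (∀ p ∈ s, P p) → ∃ q, P q ∧ ∀ p ∈ s, r p q := by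
    intro s hs
    set N : ℕ := s.sup Prod.fst + 1 with hN
    set g : ℕ ⊕ (ℕ × X) → Set X := Sum.elim (fun i => U N (c i)) (fun p => U N p.2) with hg
    set I : Finset (ℕ ⊕ (ℕ × X)) :=
      (Finset.range N).image Sum.inl ∪ s.image Sum.inr with hI
    have hopen : ∀ j ∈ I, IsOpen (g j) := by
      rintro (i | p) hj
      · exact (hU (c i)).1 N
      · exact (hU p.2).1 N
    have hne : ∀ j ∈ I, (A ∩ g j).Nonempty := by
      rintro (i | p) hj
      · exact ⟨c i, hc i, (hU (c i)).2.1 N⟩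
      · have hpI : p ∈ s := by
          simp only [hI, Finset.mem_union, Finset.mem_image] at hj
          rcases hj with ⟨i, -, h⟩ | ⟨q, hq, h⟩
          · exact absurd h (by simp)
          · exact Sum.inr_injective h ▸ hq
        exact ⟨p.2, (hs p hpI).1, (hU p.2).2.1 N⟩
    obtain ⟨y0, hy0A, hy0W⟩ := irr_biInter hA I g hopen hne
    have hWopen : IsOpen (⋂ j ∈ I, g j) := isOpen_biInter_finset hopen
    obtain ⟨y, hyA, hyV, hyW⟩ := hA.2 V (⋂ j ∈ I, g j) hV hWopen hVA ⟨y0, hy0A, hy0W⟩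
    have hyg : ∀ j ∈ I, y ∈ g j := fun j hj => Set.mem_iInter₂.1 hyW j hj
    refine ⟨(N, y), ⟨hyA, hyV, ?_⟩, ?_⟩
    · intro i hi
      exact hyg (Sum.inl i) (by
        simp only [hI, Finset.mem_union, Finset.mem_image]
        exact Or.inl ⟨i, Finset.mem_range.2 hi, rfl⟩)
    · intro p hp
      refine ⟨?_, ?_⟩
      · have : p.1 ≤ s.sup Prod.fst := Finset.le_sup (f := Prod.fst) hp
        omega
      · exact hyg (Sum.inr p) (by
          simp only [hI, Finset.mem_union, Finset.mem_image]
          exact Or.inr ⟨p, hp, rfl⟩)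
  obtain ⟨f, hfP, hfr⟩ := exists_seq_of_forall_finset_exists P r hstep
  set d : ℕ → X := fun n => (f n).2 with hd
  set l : ℕ → ℕ := fun n => (f n).1 with hl
  have hlmono : StrictMono l := strictMono_nat_of_lt_succ fun n =>
    (hfr n (n + 1) (Nat.lt_succ_self n)).1
  have hln : ∀ n, n ≤ l n := fun n => hlmono.le_apply
  have tendsto_aux : ∀ (x : X), (∀ᶠ n in atTop, d n ∈ U (l n) x) →
      Tendsto d atTop (𝓝 x) := by
    intro x hx
    rw [Filter.tendsto_def]
    intro W hW
    obtain ⟨O, hOW, hO, hxO⟩ := mem_nhds_iff.1 hW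
    obtain ⟨k, hk⟩ := (hU x).2.2.2 O hO hxO
    obtain ⟨M, hM⟩ := eventually_atTop.1 hx
    refine mem_of_superset (Filter.Ici_mem_atTop (max M k)) ?_
    intro n hn
    have hn' : M ≤ n ∧ k ≤ n := ⟨le_trans (le_max_left _ _) hn, le_trans (le_max_right _ _) hn⟩
    have h1 : d n ∈ U (l n) x := hM n hn'.1
    have h2 : U (l n) x ⊆ U k x := (hU x).2.2.1 k (l n) (le_trans hn'.2 (hln n))
    exact hOW (hk (h2 h1))
  refine ⟨d, fun n => (hfP n).1, fun n => (hfP n).2.1, ?_, ?_⟩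
  · intro i
    apply tendsto_aux
    refine eventually_atTop.2 ⟨i + 1, fun n hn => ?_⟩
    exact (hfr i n (by omega)).2
  · intro i
    apply tendsto_aux
    refine eventually_atTop.2 ⟨i + 1, fun n hn => ?_⟩
    exact (hfP n).2.2 i (lt_of_lt_of_le (by omega : i < n) (hln n))

end AuxStmt3

/-- every first-countable well-filtered T0 space is sober. -/
theorem stmt3 {X : Type u} [TopologicalSpace X] [T0Space X]
    [FirstCountableTopology X] (hwf : IsWF X) : IsSober X := by
  intro A hAirr hAcl
  obtain ⟨U, hU⟩ := exists_nhds_base (X := X)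
  set D : Set X := {x | ∃ d : ℕ → X, (∀ n, d n ∈ A) ∧
      (∀ i, Filter.Tendsto d Filter.atTop (𝓝 (d i))) ∧
      closure (Set.range d) = closure {x}} with hD
  have hDsubA : D ⊆ A := by
    rintro x ⟨d, hdA, -, hcl⟩
    have hx : x ∈ closure ({x} : Set X) := subset_closure rfl
    rw [← hcl] at hx
    exact closure_minimal (by rintro _ ⟨n, rfl⟩; exact hdA n) hAcl hx
  have hdense : ∀ V : Set X, IsOpen V → (A ∩ V).Nonempty → ∃ x ∈ D, x ∈ V := by
    intro V hV hVA
    obtain ⟨a0, ha0⟩ := hAirr.1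
    obtain ⟨d, hdA, hdV, hdconv, -⟩ :=
      build_seq U hU hAirr (fun _ => a0) (fun _ => ha0) V hV hVA
    obtain ⟨x, hx⟩ := wf_limit hwf d hdconv
    refine ⟨x, ⟨d, hdA, hdconv, hx⟩, ?_⟩
    have hd0 : d 0 ∈ closure ({x} : Set X) := by
      rw [← hx]; exact subset_closure ⟨0, rfl⟩
    obtain ⟨w, hwV, hw⟩ := mem_closure_iff.1 hd0 V hV (hdV 0)
    rw [Set.mem_singleton_iff] at hw
    rwa [← hw]
  have hdir : ∀ x ∈ D, ∀ y ∈ D, ∃ z ∈ D, specLE x z ∧ specLE y z := by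
    rintro x ⟨dx, hdxA, hdxconv, hdxcl⟩ y ⟨dy, hdyA, hdyconv, hdycl⟩
    set c : ℕ → X := fun n => if n % 2 = 0 then dx (n / 2) else dy (n / 2) with hc
    have hcA : ∀ n, c n ∈ A := by
      intro n
      simp only [hc]
      split
      · exact hdxA _
      · exact hdyA _
    obtain ⟨e, heA, -, heconv, hecconv⟩ :=
      build_seq U hU hAirr c hcA Set.univ isOpen_univ (by simpa using hAirr.1)
    obtain ⟨z, hz⟩ := wf_limit hwf e heconv
    have hcmem : ∀ j, c j ∈ closure ({z} : Set X) := by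
      intro j
      rw [← hz, mem_closure_iff]
      intro O hO hcO
      have hev : ∀ᶠ m in Filter.atTop, e m ∈ O :=
        (hecconv j).eventually (hO.eventually_mem hcO)
      obtain ⟨M, hM⟩ := Filter.eventually_atTop.1 hev
      exact ⟨e M, hM M le_rfl, Set.mem_range_self M⟩
    have hxz : specLE x z := by
      have hsub : Set.range dx ⊆ closure ({z} : Set X) := by
        rintro _ ⟨i, rfl⟩
        have h2i := hcmem (2 * i)
        have : c (2 * i) = dx i := by
          show (if (2 * i) % 2 = 0 then dx ((2 * i) / 2) else dy ((2 * i) / 2)) = dx i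
          rw [if_pos (by omega : (2 * i) % 2 = 0)]
          congr 1
          omega
        rwa [this] at h2i
      have h2 : closure (Set.range dx) ⊆ closure {z} := closure_minimal hsub isClosed_closure
      exact h2 (by rw [hdxcl]; exact subset_closure rfl)
    have hyz : specLE y z := by
      have hsub : Set.range dy ⊆ closure ({z} : Set X) := by
        rintro _ ⟨i, rfl⟩
        have h2i := hcmem (2 * i + 1)
        have : c (2 * i + 1) = dy i := by
          show (if (2 * i + 1) % 2 = 0 then dx ((2 * i + 1) / 2) else dy ((2 * i + 1) / 2)) = dy i
          rw [if_neg (by omega : ¬(2 * i + 1) % 2 = 0)]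
          congr 1
          omega
        rwa [this] at h2i
      have h2 : closure (Set.range dy) ⊆ closure {z} := closure_minimal hsub isClosed_closure
      exact h2 (by rw [hdycl]; exact subset_closure rfl)
    exact ⟨z, ⟨e, heA, heconv, hz⟩, hxz, hyz⟩
  set 𝒦 : Set (Set X) := (fun d => uClo {d}) '' D with h𝒦
  have h𝒦sub : 𝒦 ⊆ KSet X := by
    rintro _ ⟨d, hd, rfl⟩
    exact ⟨⟨d, subset_uClo _ rfl⟩, isCompact_uClo isCompact_singleton, isSat_uClo _⟩
  have hDne : D.Nonempty := by
    obtain ⟨x, hx, -⟩ := hdense Set.univ isOpen_univ (by simpa using hAirr.1)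
    exact ⟨x, hx⟩
  have hfilt : FiltFam 𝒦 := by
    refine ⟨hDne.image _, ?_⟩
    rintro _ ⟨d1, hd1, rfl⟩ _ ⟨d2, hd2, rfl⟩
    obtain ⟨d3, hd3, h13, h23⟩ := hdir d1 hd1 d2 hd2
    refine ⟨uClo {d3}, Set.mem_image_of_mem _ hd3, ?_, ?_⟩
    · rintro w ⟨s, hs, hsw⟩
      rw [Set.mem_singleton_iff] at hs
      subst hs
      exact ⟨d1, rfl, specLE_trans' h13 hsw⟩
    · rintro w ⟨s, hs, hsw⟩
      rw [Set.mem_singleton_iff] at hs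
      subst hs
      exact ⟨d2, rfl, specLE_trans' h23 hsw⟩
  have hex : ∃ s, s ∈ ⋂₀ 𝒦 ∧ s ∈ A := by
    by_contra h
    push_neg at h
    obtain ⟨_, ⟨d, hd, rfl⟩, hKU⟩ := hwf.2 𝒦 h𝒦sub hfilt Aᶜ hAcl.isOpen_compl
      (fun x hx => h x hx)
    exact hKU (subset_uClo _ rfl) (hDsubA hd)
  obtain ⟨s, hsK, hsA⟩ := hex
  have hDs : D ⊆ closure ({s} : Set X) := by
    intro d hd
    obtain ⟨d', hd', hds⟩ := hsK _ (Set.mem_image_of_mem _ hd)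
    rw [Set.mem_singleton_iff] at hd'
    subst hd'
    exact hds
  have hAcls : A ⊆ closure ({s} : Set X) := by
    have hAD : A ⊆ closure D := by
      intro t ht
      rw [mem_closure_iff]
      intro O hO htO
      obtain ⟨x, hxD, hxO⟩ := hdense O hO ⟨t, ht, htO⟩
      exact ⟨x, hxO, hxD⟩
    exact hAD.trans (closure_minimal hDs isClosed_closure)
  have hmain : A = closure ({s} : Set X) :=
    Set.Subset.antisymm hAcls (closure_minimal (Set.singleton_subset_iff.2 hsA) hAcl)
  refine ⟨s, hmain, ?_⟩
  intro y hy
  have hcl : closure ({y} : Set X) = closure {s} := by rw [← hy, ← hmain]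
  exact (inseparable_iff_closure_eq.2 hcl).eq
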